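/- Crossing symmetry of the one-loop box function: for all z ≠ z̄ in (0,1), define Φ(z,z̄) := [ log((1−z)/(1−z̄)) · log(z z̄) + 2·(Li₂(z) − Li₂(z̄)) ] / (z − z̄). Then Φ(1−z, 1−z̄) = Φ(z,z̄); equivalently, in terms of the cross-ratios u = z z̄ and v = (1−z)(1−z̄), the box function satisfies Φ(u,v) = Φ(v,u). -/

import Mathlib

open Real

/-- The dilogarithm `Li₂(x) = ∑_{n≥1} xⁿ/n²`. -/
noncomputable def Li2 (x : ℝ) : ℝ := ∑' n : ℕ, x ^ (n + 1) / ((n : ℝ) + 1) ^ 2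

/-- The one-loop box function
`Φ(z,z̄) = [log((1−z)/(1−z̄))·log(z z̄) + 2(Li₂(z) − Li₂(z̄))]/(z − z̄)`. -/
noncomputable def boxFn (z zb : ℝ) : ℝ :=
  (Real.log ((1 - z) / (1 - zb)) * Real.log (z * zb) + 2 * (Li2 z - Li2 zb)) / (z - zb)

lemma Li2_hasDerivAt {x : ℝ} (hx : x ∈ Set.Ioo (0 : ℝ) 1) :
    HasDerivAt Li2 (-Real.log (1 - x) / x) x := by
  obtain ⟨hx0, hx1⟩ := hx
  have hxlt : |x| < 1 := by rw [abs_of_pos hx0]; exact hx1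
  obtain ⟨r, hr1, hr2⟩ : ∃ r : ℝ, |x| < r ∧ r < 1 :=
    ⟨(|x| + 1) / 2, by linarith, by linarith⟩
  have hr0 : (0:ℝ) < r := lt_of_le_of_lt (abs_nonneg x) hr1
  have key : HasDerivAt (fun y : ℝ => ∑' n : ℕ, y ^ (n + 1) / ((n : ℝ) + 1) ^ 2)
      (∑' n : ℕ, x ^ n / ((n : ℝ) + 1)) x := by
    apply hasDerivAt_tsum_of_isPreconnected (u := fun n : ℕ => r ^ n)
      (t := Set.Ioo (-r) r) (y₀ := 0)
      (g' := fun (n : ℕ) (y : ℝ) => y ^ n / ((n : ℝ) + 1))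
    · exact summable_geometric_of_lt_one hr0.le hr2
    · exact isOpen_Ioo
    · exact (convex_Ioo _ _).isPreconnected
    · intro n y _
      have h1 : HasDerivAt (fun y : ℝ => y ^ (n + 1)) (((n:ℝ) + 1) * y ^ n) y := by
        simpa using hasDerivAt_pow (n + 1) y
      have := h1.div_const (((n : ℝ) + 1) ^ 2)
      convert this using 1
      · rfl
      have hn : ((n : ℝ) + 1) ≠ 0 := by positivity
      field_simp
    · intro n y hy
      rw [Real.norm_eq_abs, abs_div, abs_pow]
      have h1 : |y| ≤ r := le_of_lt (abs_lt.mpr ⟨hy.1, hy.2⟩)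
      have h2 : |((n : ℝ) + 1)| = (n : ℝ) + 1 := abs_of_pos (by positivity)
      rw [h2]
      calc |y| ^ n / ((n : ℝ) + 1) ≤ |y| ^ n / 1 := by
            apply div_le_div_of_nonneg_left (by positivity) one_pos (by simp)
        _ = |y| ^ n := by ring
        _ ≤ r ^ n := pow_le_pow_left₀ (abs_nonneg y) h1 n
    · exact Set.mem_Ioo.mpr ⟨by linarith, hr0⟩
    · have h0 : (fun n : ℕ => (0:ℝ) ^ (n + 1) / ((n : ℝ) + 1) ^ 2) = fun _ => (0:ℝ) := by
        funext n; simp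
      rw [h0]; exact summable_zero
    · exact Set.mem_Ioo.mpr ⟨by linarith [abs_lt.mp hr1], (abs_lt.mp hr1).2⟩
  have hsum : HasSum (fun n : ℕ => x ^ n / ((n : ℝ) + 1)) (-Real.log (1 - x) / x) := by
    have h := hasSum_pow_div_log_of_abs_lt_one (x := x) (by rw [abs_of_pos hx0]; exact hx1)
    have h2 := h.div_const x
    convert h2 using 2 with n
    · rfl
    rw [pow_succ]
    field_simp
  have : Li2 = fun y : ℝ => ∑' n : ℕ, y ^ (n + 1) / ((n : ℝ) + 1) ^ 2 := rfl
  rw [this, ← hsum.tsum_eq] at *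
  exact key

lemma reflection_const {x y : ℝ} (hx : x ∈ Set.Ioo (0 : ℝ) 1) (hy : y ∈ Set.Ioo (0 : ℝ) 1) :
    Li2 x + Li2 (1 - x) + Real.log x * Real.log (1 - x)
      = Li2 y + Li2 (1 - y) + Real.log y * Real.log (1 - y) := by
  set g : ℝ → ℝ := fun t => Li2 t + Li2 (1 - t) + Real.log t * Real.log (1 - t) with hg
  have hderiv : ∀ t ∈ Set.Ioo (0 : ℝ) 1, HasDerivAt g 0 t := by
    intro t ht
    obtain ⟨ht0, ht1⟩ := ht
    have h1 : HasDerivAt Li2 (-Real.log (1 - t) / t) t := Li2_hasDerivAt ⟨ht0, ht1⟩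
    have h2 : HasDerivAt (fun s : ℝ => Li2 (1 - s))
        (-Real.log (1 - (1 - t)) / (1 - t) * (-1)) t := by
      exact (Li2_hasDerivAt ⟨by linarith, by linarith⟩).comp t
        ((hasDerivAt_id t).const_sub 1)
    have h3 : HasDerivAt (fun s : ℝ => Real.log s * Real.log (1 - s))
        ((1 / t) * Real.log (1 - t) + Real.log t * ((-1) / (1 - t))) t := by
      have hl1 : HasDerivAt Real.log (1 / t) t := by
        simpa [one_div] using Real.hasDerivAt_log (ne_of_gt ht0)
      have hl2 : HasDerivAt (fun s : ℝ => Real.log (1 - s)) ((-1) / (1 - t)) t := by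
        have := (Real.hasDerivAt_log (x := 1 - t) (by linarith)).comp t
          ((hasDerivAt_const t (1:ℝ)).sub (hasDerivAt_id t))
        simpa [div_eq_mul_inv, mul_comm, Function.comp_def] using this
      exact hl1.mul hl2
    have := (h1.add h2).add h3
    convert this using 1
    · rfl
    · rfl
    · rfl
    have ht1' : (1:ℝ) - t ≠ 0 := by linarith
    have h1t : 1 - (1 - t) = t := by ring
    rw [h1t]
    field_simp
    ring
  have hdiff : DifferentiableOn ℝ g (Set.Ioo 0 1) :=
    fun t ht => ((hderiv t ht).differentiableAt).differentiableWithinAt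
  have hzero : ∀ t ∈ Set.Ioo (0:ℝ) 1, fderivWithin ℝ g (Set.Ioo 0 1) t = 0 := by
    intro t ht
    have h1 : fderivWithin ℝ g (Set.Ioo 0 1) t = fderiv ℝ g t :=
      fderivWithin_of_isOpen isOpen_Ioo ht
    rw [h1, (hderiv t ht).hasFDerivAt.fderiv]
    ext s
    simp
  exact (convex_Ioo (0:ℝ) 1).is_const_of_fderivWithin_eq_zero hdiff hzero hx hy

/-- crossing symmetry of the one-loop box function.  For
z ≠ z̄ in (0,1), `Φ(1−z, 1−z̄) = Φ(z,z̄)`; in terms of the cross-ratios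
u = z z̄ and v = (1−z)(1−z̄), this says `Φ(u,v) = Φ(v,u)`. -/
theorem box_crossing_symmetry (z zb : ℝ) (hz : z ∈ Set.Ioo (0 : ℝ) 1)
    (hzb : zb ∈ Set.Ioo (0 : ℝ) 1) (hne : z ≠ zb) :
    boxFn (1 - z) (1 - zb) = boxFn z zb := by
  obtain ⟨hz0, hz1⟩ := hz
  obtain ⟨hb0, hb1⟩ := hzb
  have h1z : (0:ℝ) < 1 - z := by linarith
  have h1b : (0:ℝ) < 1 - zb := by linarith
  have key := reflection_const (x := z) (y := zb) ⟨hz0, hz1⟩ ⟨hb0, hb1⟩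
  unfold boxFn
  have h11 : (1:ℝ) - (1 - z) = z := by ring
  have h12 : (1:ℝ) - (1 - zb) = zb := by ring
  rw [h11, h12]
  rw [Real.log_div (ne_of_gt hz0) (ne_of_gt hb0), Real.log_div (ne_of_gt h1z) (ne_of_gt h1b),
    Real.log_mul (ne_of_gt h1z) (ne_of_gt h1b), Real.log_mul (ne_of_gt hz0) (ne_of_gt hb0)]
  have hLz : Li2 (1 - z) = (Li2 zb + Li2 (1 - zb) + Real.log zb * Real.log (1 - zb))
      - Li2 z - Real.log z * Real.log (1 - z) := by linarith
  rw [hLz]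
  have hd : (1:ℝ) - z - (1 - zb) = -(z - zb) := by ring
  rw [hd]
  rw [div_neg, ← neg_div]
  congr 1
  ring
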